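/- arXiv:2212.10106 — 6 statements merged into one kernel-verified Lean document; each statement's English description precedes it below -/
import Mathlib

section
/- Let ∇(x,y) = ∏_{i=1}^{a} ∏_{j=1}^{b} (x_i - y_j) in k[x_1,...,x_a,y_1,...,y_b]. For all n ≥ 0, the operator L_n · Q = -∑_{i=1}^{a} x_i^{n+1} ∂Q/∂x_i - ∑_{j=1}^{b} y_j^{n+1} ∂Q/∂y_j satisfies L_n · ∇ = -(∑_{k+ℓ=n} p_k(x) p_ℓ(y)) ∇, where p_k(x) = ∑_{i=1}^a x_i^k and p_ℓ(y) = ∑_{j=1}^b y_j^ℓ are power sum polynomials. -/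
open MvPolynomial Finset

lemma pderiv_finset_prod' {R : Type*} [CommRing R] {σ ι : Type*} [DecidableEq ι]
    (v : σ) (s : Finset ι) (f : ι → MvPolynomial σ R) :
    pderiv v (∏ i ∈ s, f i) = ∑ i ∈ s, pderiv v (f i) * ∏ j ∈ s.erase i, f j := by
  induction s using Finset.induction_on with
  | empty => simp
  | insert c s ha ih =>
    rw [Finset.prod_insert ha, pderiv_mul, ih, Finset.sum_insert ha, Finset.erase_insert ha,
      Finset.mul_sum]
    congr 1
    refine Finset.sum_congr rfl fun i hi => ?_
    rw [Finset.erase_insert_of_ne (by rintro rfl; exact ha hi),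
      Finset.prod_insert (fun h => ha (Finset.erase_subset _ _ h))]
    ring

/-- For ∇ = ∏ᵢ∏ⱼ (xᵢ - yⱼ) and n ≥ 0, the operator
Lₙ·Q = -∑ᵥ v^{n+1} ∂Q/∂v (sum over all variables) satisfies
Lₙ·∇ = -(∑_{k+ℓ=n} p_k(x) p_ℓ(y)) ∇, with power sums p_k(x) = ∑ᵢ xᵢᵏ. -/
theorem stmt_5 {R : Type*} [CommRing R] (a b : ℕ) (n : ℕ)
    (nabla : MvPolynomial (Fin a ⊕ Fin b) R)
    (hnabla : nabla = ∏ i : Fin a, ∏ j : Fin b, (X (Sum.inl i) - X (Sum.inr j))) :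
    -(∑ v : Fin a ⊕ Fin b, X v ^ (n + 1) * pderiv v nabla) =
      -((∑ c ∈ range (n + 1),
          (∑ i : Fin a, X (Sum.inl i) ^ c) * (∑ j : Fin b, X (Sum.inr j) ^ (n - c)))
        * nabla) := by
  congr 1
  set g : Fin a × Fin b → MvPolynomial (Fin a ⊕ Fin b) R :=
    fun p => X (Sum.inl p.1) - X (Sum.inr p.2) with hg
  have hnab : nabla = ∏ p : Fin a × Fin b, g p := by
    rw [hnabla, ← Finset.prod_product']
    rfl
  -- key: sum over v of X v ^ (n+1) * pderiv v (g p)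
  have key : ∀ p : Fin a × Fin b,
      (∑ v : Fin a ⊕ Fin b, X v ^ (n + 1) * pderiv v (g p)) =
        X (Sum.inl p.1) ^ (n + 1) - X (Sum.inr p.2) ^ (n + 1) := by
    intro p
    have h1 : (∑ v : Fin a ⊕ Fin b, X v ^ (n + 1) *
        pderiv v (X (Sum.inl p.1) : MvPolynomial (Fin a ⊕ Fin b) R)) =
        X (Sum.inl p.1) ^ (n + 1) := by
      rw [Finset.sum_eq_single (Sum.inl p.1)] <;> simp (config := {contextual := true}) [eq_comm]
    have h2 : (∑ v : Fin a ⊕ Fin b, X v ^ (n + 1) *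
        pderiv v (X (Sum.inr p.2) : MvPolynomial (Fin a ⊕ Fin b) R)) =
        X (Sum.inr p.2) ^ (n + 1) := by
      rw [Finset.sum_eq_single (Sum.inr p.2)] <;> simp (config := {contextual := true}) [eq_comm]
    simp only [hg, map_sub, mul_sub, Finset.sum_sub_distrib, h1, h2]
  calc
    (∑ v : Fin a ⊕ Fin b, X v ^ (n + 1) * pderiv v nabla)
        = ∑ p : Fin a × Fin b,
            (∑ v : Fin a ⊕ Fin b, X v ^ (n + 1) * pderiv v (g p)) *
              ∏ q ∈ Finset.univ.erase p, g q := by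
          rw [hnab]
          simp_rw [pderiv_finset_prod', Finset.mul_sum, Finset.sum_mul]
          rw [Finset.sum_comm]
          exact Finset.sum_congr rfl fun p _ =>
            Finset.sum_congr rfl fun v _ => (mul_assoc _ _ _).symm
    _ = ∑ p : Fin a × Fin b,
          (∑ c ∈ range (n + 1), X (Sum.inl p.1) ^ c * X (Sum.inr p.2) ^ (n - c)) * nabla := by
          refine Finset.sum_congr rfl fun p _ => ?_
          rw [key, ← geom_sum₂_mul (X (Sum.inl p.1)) (X (Sum.inr p.2)) (n + 1), mul_assoc, hnab,
            ← Finset.mul_prod_erase _ _ (Finset.mem_univ p)]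
          simp [Nat.add_sub_cancel, hg]
    _ = (∑ c ∈ range (n + 1),
          (∑ i : Fin a, X (Sum.inl i) ^ c) * (∑ j : Fin b, X (Sum.inr j) ^ (n - c))) * nabla := by
          simp_rw [Finset.sum_mul]
          rw [Finset.sum_comm]
          refine Finset.sum_congr rfl fun c _ => ?_
          rw [← Finset.sum_mul, Fintype.sum_prod_type]
          simp [Finset.sum_mul, Finset.mul_sum, mul_assoc]
end

section
/- For any α ∈ ℕ and ∇ = ∏_{i,j}(x_i - y_j), the operator L_n satisfies L_n · (∇^α) = -α (∑_{k+ℓ=n} p_k(x) p_ℓ(y)) ∇^α for all n ≥ 0. -/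
open MvPolynomial Finset

lemma stmt6_deriv_prod {R A : Type*} [CommRing R] [CommRing A] [Algebra R A]
    (D : Derivation R A A) {ι : Type*} [DecidableEq ι] (s : Finset ι) (f : ι → A) :
    D (∏ e ∈ s, f e) = ∑ e ∈ s, (∏ e' ∈ s.erase e, f e') * D (f e) := by
  induction s using Finset.induction_on with
  | empty => simp
  | insert _ _ ha ih =>
    rename_i c s
    rw [Finset.prod_insert ha, D.leibniz, Finset.sum_insert ha, Finset.erase_insert ha]
    simp only [smul_eq_mul, ih, Finset.mul_sum]
    rw [add_comm]
    congr 1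
    · apply Finset.sum_congr rfl
      intro e he
      have hne : e ≠ c := fun h => ha (h ▸ he)
      rw [Finset.erase_insert_of_ne hne.symm,
        Finset.prod_insert (fun h => ha (Finset.mem_of_mem_erase h))]
      ring

lemma stmt6_sum_deriv_apply {R : Type*} [CommRing R] {σ : Type*} [DecidableEq σ] (s : Finset σ)
    (c : σ → MvPolynomial σ R) (Q : MvPolynomial σ R) :
    ((∑ v ∈ s, c v • pderiv v :
        Derivation R (MvPolynomial σ R) (MvPolynomial σ R))) Q =
      ∑ v ∈ s, c v * pderiv v Q := by
  induction s using Finset.induction_on with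
  | empty => simp
  | insert _ _ ha ih =>
    rename_i w s
    rw [Finset.sum_insert ha, Finset.sum_insert ha, Derivation.add_apply,
      Derivation.smul_apply, smul_eq_mul, ih]

/-- For any α ∈ ℕ and ∇ = ∏ᵢ∏ⱼ (xᵢ - yⱼ), the operator Lₙ satisfies
Lₙ·(∇^α) = -α (∑_{k+ℓ=n} p_k(x) p_ℓ(y)) ∇^α for all n ≥ 0. -/
theorem stmt_6 {R : Type*} [CommRing R] (a b : ℕ) (n : ℕ) (α : ℕ)
    (nabla : MvPolynomial (Fin a ⊕ Fin b) R)
    (hnabla : nabla = ∏ i : Fin a, ∏ j : Fin b, (X (Sum.inl i) - X (Sum.inr j))) :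
    -(∑ v : Fin a ⊕ Fin b, X v ^ (n + 1) * pderiv v (nabla ^ α)) =
      -((α : MvPolynomial (Fin a ⊕ Fin b) R) *
        (∑ c ∈ range (n + 1),
          (∑ i : Fin a, X (Sum.inl i) ^ c) * (∑ j : Fin b, X (Sum.inr j) ^ (n - c)))
        * nabla ^ α) := by
  set D : Derivation R (MvPolynomial (Fin a ⊕ Fin b) R) (MvPolynomial (Fin a ⊕ Fin b) R) := ∑ v : Fin a ⊕ Fin b, ((X v : MvPolynomial (Fin a ⊕ Fin b) R) ^ (n + 1)) • pderiv v with hD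
  set S : MvPolynomial (Fin a ⊕ Fin b) R := ∑ c ∈ range (n + 1),
      (∑ i : Fin a, X (Sum.inl i) ^ c) * (∑ j : Fin b, X (Sum.inr j) ^ (n - c)) with hS
  have hDapp : ∀ Q : MvPolynomial (Fin a ⊕ Fin b) R, D Q = ∑ v : Fin a ⊕ Fin b, X v ^ (n + 1) * pderiv v Q := by
    intro Q; rw [hD]; exact stmt6_sum_deriv_apply _ _ _
  -- the base case: D nabla = S * nabla
  have hbase : D nabla = S * nabla := by
    have hprod : nabla = ∏ p ∈ (univ : Finset (Fin a × Fin b)),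
        (X (Sum.inl p.1) - X (Sum.inr p.2) : MvPolynomial (Fin a ⊕ Fin b) R) := by
      rw [hnabla, ← Finset.prod_product', Finset.univ_product_univ]
    have hDf : ∀ p : Fin a × Fin b,
        D (X (Sum.inl p.1) - X (Sum.inr p.2) : MvPolynomial (Fin a ⊕ Fin b) R) =
          (X (Sum.inl p.1) - X (Sum.inr p.2)) *
            ∑ c ∈ range (n + 1), X (Sum.inl p.1) ^ c * X (Sum.inr p.2) ^ (n - c) := by
      intro p
      have : ((X (Sum.inl p.1) : MvPolynomial (Fin a ⊕ Fin b) R) ^ (n + 1) - X (Sum.inr p.2) ^ (n + 1)) =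
          (X (Sum.inl p.1) - X (Sum.inr p.2)) *
            ∑ c ∈ range (n + 1), X (Sum.inl p.1) ^ c * X (Sum.inr p.2) ^ (n - c) := by
      -- geom_sum₂_mul with n+1 : exponents n + 1 - 1 - i = n - i
        rw [mul_comm, ← geom_sum₂_mul (X (Sum.inl p.1) : MvPolynomial (Fin a ⊕ Fin b) R) (X (Sum.inr p.2)) (n + 1), Nat.add_sub_cancel]
      rw [hDapp, ← this]
      rw [Fintype.sum_sum_type]
      simp only [map_sub, pderiv_X]
      classical
      simp only [Pi.single_apply, Sum.inl.injEq, Sum.inr.injEq, reduceCtorEq,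
        if_false, mul_ite, mul_one, mul_zero, mul_sub, Finset.sum_sub_distrib,
        Finset.sum_ite_eq, Finset.mem_univ, if_true, Finset.sum_const_zero]
      ring
    rw [hprod, stmt6_deriv_prod]
    have : ∀ p ∈ (univ : Finset (Fin a × Fin b)),
        (∏ q ∈ (univ : Finset (Fin a × Fin b)).erase p,
            (X (Sum.inl q.1) - X (Sum.inr q.2) : MvPolynomial (Fin a ⊕ Fin b) R)) *
          D (X (Sum.inl p.1) - X (Sum.inr p.2)) =
        nabla * ∑ c ∈ range (n + 1), X (Sum.inl p.1) ^ c * X (Sum.inr p.2) ^ (n - c) := by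
      intro p hp
      rw [hDf p, ← mul_assoc, Finset.prod_erase_mul _ _ hp, ← hprod]
    rw [Finset.sum_congr rfl this, ← Finset.mul_sum, mul_comm]
    congr 1
    rw [hS, Finset.sum_comm]
    apply Finset.sum_congr rfl
    intro c _
    rw [Finset.sum_mul_sum, Fintype.sum_prod_type]
  -- now the power
  have key : D (nabla ^ α) = (α : MvPolynomial (Fin a ⊕ Fin b) R) * S * nabla ^ α := by
    cases α with
    | zero => simp
    | succ m =>
      rw [Derivation.leibniz_pow, hbase]
      simp only [smul_eq_mul, Nat.add_sub_cancel, nsmul_eq_mul]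
      rw [pow_succ]
      ring
  rw [← hDapp, key]
end

section
/- For any two distinct indices i ≠ j in {1,...,k}, the family τ_n = h_n(x_i, x_j) = ∑_{a+b=n} x_i^a x_j^b (for n ≥ 0, and τ_{-1} = 0) in k[x_1,...,x_k] is W_{-1}^∞-flat with respect to the action L_n · Q = -∑_ℓ x_ℓ^{n+1} ∂Q/∂x_ℓ, that is, L_n · τ_m - L_m · τ_n = (n-m) τ_{n+m} for all n, m ≥ -1. -/
open MvPolynomial Finset

section Aux

variable {R : Type*} [CommRing R] {k : ℕ}

lemma aux_regular (i j : Fin k) (hij : i ≠ j) :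
    IsRightRegular (X i - X j : MvPolynomial (Fin k) R) := by
  classical
  set f : Fin k → MvPolynomial (Fin k) R := fun l => if l = i then X i + X j else X l with hf
  set g : Fin k → MvPolynomial (Fin k) R := fun l => if l = i then X i - X j else X l with hg
  have hgs : ∀ p : MvPolynomial (Fin k) R, aeval g (aeval f p) = p := by
    intro p
    have hcomp : (aeval g).comp (aeval f) = AlgHom.id R (MvPolynomial (Fin k) R) := by
      apply MvPolynomial.algHom_ext
      intro l
      by_cases hl : l = i
      · subst hl
        simp [hf, hg, hij.symm]
      · simp [hf, hg, hl]
    calc aeval g (aeval f p) = ((aeval g).comp (aeval f)) p := rfl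
      _ = p := by rw [hcomp]; rfl
  intro p q (hpq : p * (X i - X j) = q * (X i - X j))
  have h1 := congrArg (aeval f) hpq
  rw [map_mul, map_mul, map_sub, aeval_X, aeval_X] at h1
  simp only [hf, if_pos rfl, if_neg hij.symm] at h1
  rw [add_sub_cancel_right] at h1
  have h2 : aeval f p = aeval f q := (isRegular_X (n := i)).right h1
  have h3 := congrArg (aeval g) h2
  rwa [hgs, hgs] at h3

/-- geometric-sum polynomial `h_{T-1}(X i, X j)` -/
private noncomputable def HP (i j : Fin k) (T : ℕ) : MvPolynomial (Fin k) R :=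
  ∑ a ∈ range T, X i ^ a * X j ^ (T - 1 - a)

lemma HP_mul (i j : Fin k) (T : ℕ) :
    (HP i j T : MvPolynomial (Fin k) R) * (X i - X j) = X i ^ T - X j ^ T :=
  geom_sum₂_mul _ _ T

/-- derivative sum applied to a power of a variable -/
lemma aux_DXpow (i : Fin k) (N M : ℕ) :
    ∑ l : Fin k, (X l ^ N * pderiv l (X i ^ M) : MvPolynomial (Fin k) R)
      = M • (X i ^ N * X i ^ (M - 1)) := by
  rw [Finset.sum_eq_single i]
  · rw [Derivation.leibniz_pow, pderiv_X_self]
    rw [smul_eq_mul, mul_one, mul_smul_comm]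
  · intro l _ hl
    rw [Derivation.leibniz_pow, pderiv_X_of_ne (Ne.symm hl), smul_zero, smul_zero, mul_zero]
  · simp

lemma aux_Dgeom (i j : Fin k) (N T : ℕ) :
    (∑ l : Fin k, (X l ^ N * pderiv l (HP i j T) : MvPolynomial (Fin k) R)) * (X i - X j)
      = (T : ℤ) • (X i ^ (N + T - 1) - X j ^ (N + T - 1)) - (X i ^ N - X j ^ N) * HP i j T := by
  have key : ∀ l : Fin k,
      (X l ^ N * pderiv l (HP i j T) : MvPolynomial (Fin k) R) * (X i - X j)
        = X l ^ N * pderiv l (X i ^ T - X j ^ T)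
          - X l ^ N * pderiv l (X i - X j) * HP i j T := by
    intro l
    have h := congrArg (pderiv l) (HP_mul (R := R) i j T)
    rw [Derivation.leibniz] at h
    have h' : pderiv l (HP i j T : MvPolynomial (Fin k) R) * (X i - X j)
        = pderiv l (X i ^ T - X j ^ T) - pderiv l (X i - X j) * HP i j T := by
      rw [← h, smul_eq_mul, smul_eq_mul]; ring
    rw [mul_assoc, h']; ring
  rw [Finset.sum_mul]
  simp only [key]
  rw [Finset.sum_sub_distrib]
  congr 1
  · simp only [map_sub, mul_sub]
    rw [Finset.sum_sub_distrib, aux_DXpow, aux_DXpow]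
    rcases Nat.eq_zero_or_pos T with hT | hT
    · subst hT; simp
    · have e : N + T - 1 = N + (T - 1) := by omega
      rw [e, pow_add, pow_add, natCast_zsmul, smul_sub]
  · rw [← Finset.sum_mul]
    congr 1
    simp only [map_sub]
    calc ∑ l : Fin k, X l ^ N * (pderiv l (X i) - pderiv l (X j))
        = ∑ l : Fin k, (X l ^ N * pderiv l ((X i : MvPolynomial (Fin k) R) ^ 1)
            - X l ^ N * pderiv l ((X j : MvPolynomial (Fin k) R) ^ 1)) := by
          simp [mul_sub]
      _ = X i ^ N - X j ^ N := by
          rw [Finset.sum_sub_distrib, aux_DXpow, aux_DXpow]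
          simp

end Aux

/-- For distinct indices i ≠ j, the family τₙ = hₙ(xᵢ, xⱼ) = ∑_{a+b=n} xᵢᵃ xⱼᵇ
(with τ₋₁ = 0) is 𝔚₋₁^∞-flat with respect to Lₙ·Q = -∑ₗ xₗ^{n+1} ∂Q/∂xₗ. -/
theorem stmt_9 {R : Type*} [CommRing R] {k : ℕ} (i j : Fin k) (hij : i ≠ j)
    (L : ℤ → MvPolynomial (Fin k) R → MvPolynomial (Fin k) R)
    (hL : ∀ (n : ℤ) (Q : MvPolynomial (Fin k) R),
      L n Q = -∑ l : Fin k, X l ^ (n + 1).toNat * pderiv l Q)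
    (τ : ℤ → MvPolynomial (Fin k) R)
    (hτ : ∀ n : ℤ, τ n =
      if 0 ≤ n then ∑ a ∈ range (n.toNat + 1), X i ^ a * X j ^ (n.toNat - a) else 0)
    (n m : ℤ) (hn : -1 ≤ n) (hm : -1 ≤ m) :
    L n (τ m) - L m (τ n) = (n - m) • τ (n + m) := by
  classical
  set N := (n + 1).toNat with hN
  set M := (m + 1).toNat with hM
  have hNn : (N : ℤ) = n + 1 := Int.toNat_of_nonneg (by omega)
  have hMm : (M : ℤ) = m + 1 := Int.toNat_of_nonneg (by omega)
  have hτH : ∀ (p : ℤ), -1 ≤ p → τ p = HP i j (p + 1).toNat := by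
    intro p hp
    rw [hτ]
    rcases lt_or_ge p 0 with h0 | h0
    · have hp1 : p = -1 := by omega
      subst hp1
      simp [HP]
    · rw [if_pos h0]
      have h1 : (p + 1).toNat = p.toNat + 1 := by omega
      rw [h1, HP]
      rfl
  have hτm : τ m = HP i j M := hτH m hm
  have hτn : τ n = HP i j N := hτH n hn
  have hreg := aux_regular (R := R) i j hij
  have main : L n (τ m) - L m (τ n) = ((N : ℤ) - M) • HP i j (N + M - 1) := by
    apply hreg
    show _ * (X i - X j) = _ * (X i - X j)
    rw [hL, hL, hτm, hτn, ← hN, ← hM, sub_mul, neg_mul, neg_mul, aux_Dgeom i j,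
      aux_Dgeom i j, smul_mul_assoc, HP_mul]
    have e1 : (X i ^ N - X j ^ N) * (HP i j M : MvPolynomial (Fin k) R)
        = (X i ^ M - X j ^ M) * HP i j N := by
      rw [← HP_mul (R := R) i j N, ← HP_mul (R := R) i j M]; ring
    have e2 : M + N - 1 = N + M - 1 := by omega
    rw [e2, e1, sub_smul]
    abel
  rw [main]
  rcases lt_or_ge (n + m) (-1) with hnm | hnm
  · have e3 : (N : ℤ) - M = 0 := by omega
    have e4 : n - m = 0 := by omega
    rw [e3, e4, zero_smul, zero_smul]
  · rw [hτH _ hnm]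
    have h1 : (n + m + 1).toNat = N + M - 1 := by omega
    have h2 : n - m = (N : ℤ) - M := by omega
    rw [h1, h2]
end

section
/- In the polynomial ring F_p[x_1,...,x_a] over the field with p elements (p prime), the derivation ∂ = ∑_{k=1}^{a} x_k^2 ∂/∂x_k satisfies ∂^p = 0 as an operator on F_p[x_1,...,x_a]. -/
open MvPolynomial Finset

private lemma iter_zero {A : Type*} [AddCommMonoid A] (D : A → A)
    (hsmul : ∀ (n : ℕ) (x : A), D (n • x) = n • D x) (n : ℕ) :
    D^[n] 0 = 0 := by
  have h0 : D 0 = 0 := by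
    have := hsmul 0 0
    simpa using this
  induction n with
  | zero => simp
  | succ n ih => rw [Function.iterate_succ_apply', ih, h0]

private lemma iter_add {A : Type*} [AddCommMonoid A] (D : A → A)
    (hadd : ∀ x y : A, D (x + y) = D x + D y) (n : ℕ) (x y : A) :
    D^[n] (x + y) = D^[n] x + D^[n] y := by
  induction n with
  | zero => simp
  | succ n ih => rw [Function.iterate_succ_apply', ih, hadd,
      Function.iterate_succ_apply', Function.iterate_succ_apply']

private lemma iter_leibniz {A : Type*} [CommSemiring A] (D : A → A)
    (hadd : ∀ x y : A, D (x + y) = D x + D y)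
    (hsmul : ∀ (n : ℕ) (x : A), D (n • x) = n • D x)
    (hmul : ∀ x y : A, D (x * y) = D x * y + x * D y)
    (n : ℕ) (p q : A) :
    D^[n] (p * q) = ∑ k ∈ range n.succ, (n.choose k • (D^[n - k] p * D^[k] q)) := by
  have hsum : ∀ (s : Finset ℕ) (f : ℕ → A), D (∑ i ∈ s, f i) = ∑ i ∈ s, D (f i) := by
    intro s f
    induction s using Finset.cons_induction with
    | empty =>
      have := hsmul 0 0
      simpa using this
    | cons a s ha ih => rw [Finset.sum_cons, hadd, ih, Finset.sum_cons]
  induction n with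
  | zero => simp [Finset.range]
  | succ n IH =>
    calc
      D^[n + 1] (p * q) =
          D (∑ k ∈ range n.succ, n.choose k • (D^[n - k] p * D^[k] q)) := by
        rw [Function.iterate_succ_apply', IH]
      _ = (∑ k ∈ range n.succ, n.choose k • (D^[n - k + 1] p * D^[k] q)) +
          ∑ k ∈ range n.succ, n.choose k • (D^[n - k] p * D^[k + 1] q) := by
        rw [hsum]
        simp_rw [hsmul, hmul, Function.iterate_succ_apply', smul_add, sum_add_distrib]
      _ = (∑ k ∈ range n.succ,
                n.choose k.succ • (D^[n - k] p * D^[k + 1] q)) +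
              1 • (D^[n + 1] p * D^[0] q) +
            ∑ k ∈ range n.succ, n.choose k • (D^[n - k] p * D^[k + 1] q) := ?_
      _ = ((∑ k ∈ range n.succ, n.choose k • (D^[n - k] p * D^[k + 1] q)) +
              ∑ k ∈ range n.succ,
                n.choose k.succ • (D^[n - k] p * D^[k + 1] q)) +
            1 • (D^[n + 1] p * D^[0] q) := by
        rw [add_comm, add_assoc]
      _ = (∑ i ∈ range n.succ,
              (n + 1).choose (i + 1) • (D^[n + 1 - (i + 1)] p * D^[i + 1] q)) +
            1 • (D^[n + 1] p * D^[0] q) := by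
        simp_rw [Nat.choose_succ_succ, Nat.succ_sub_succ, add_smul, sum_add_distrib]
      _ = ∑ k ∈ range n.succ.succ,
            n.succ.choose k • (D^[n.succ - k] p * D^[k] q) := by
        rw [sum_range_succ' _ n.succ, Nat.choose_zero_right, tsub_zero]
    congr
    refine (sum_range_succ' _ _).trans (congr_arg₂ (· + ·) ?_ ?_)
    · rw [sum_range_succ, Nat.choose_succ_self, zero_smul, add_zero]
      refine sum_congr rfl fun k hk => ?_
      rw [mem_range] at hk
      congr
      omega
    · rw [Nat.choose_zero_right, tsub_zero]

/-- In 𝔽ₚ[x₁,…,xₐ], the derivation ∂ = ∑ₖ xₖ² ∂/∂xₖ satisfies ∂ᵖ = 0. -/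
theorem stmt_11 (p : ℕ) [Fact p.Prime] (a : ℕ)
    (D : MvPolynomial (Fin a) (ZMod p) → MvPolynomial (Fin a) (ZMod p))
    (hD : ∀ Q : MvPolynomial (Fin a) (ZMod p), D Q = ∑ k : Fin a, X k ^ 2 * pderiv k Q)
    (Q : MvPolynomial (Fin a) (ZMod p)) :
    D^[p] Q = 0 := by
  have hp := (Fact.out : p.Prime)
  -- basic properties of D
  have hadd : ∀ x y, D (x + y) = D x + D y := by
    intro x y
    simp [hD, mul_add, Finset.sum_add_distrib]
  have hsmul : ∀ (n : ℕ) x, D (n • x) = n • D x := by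
    intro n x
    simp only [hD, map_nsmul, mul_smul_comm, Finset.smul_sum]
  have hmul : ∀ x y, D (x * y) = D x * y + x * D y := by
    intro x y
    rw [hD, hD, hD, Finset.sum_mul, Finset.mul_sum, ← Finset.sum_add_distrib]
    refine Finset.sum_congr rfl fun k _ => ?_
    rw [pderiv_mul]
    ring
  -- nsmul by a multiple of p is zero
  have hkill : ∀ (n : ℕ) (x : MvPolynomial (Fin a) (ZMod p)), p ∣ n → n • x = 0 := by
    intro n x hn
    rw [← Nat.cast_smul_eq_nsmul (ZMod p) n x,
      (ZMod.natCast_eq_zero_iff n p).mpr hn, zero_smul]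
  -- D^[n] on X k
  have hXpow : ∀ (j : Fin a) (n : ℕ), D^[n] (X j) = (Nat.factorial n) • ((X j : MvPolynomial (Fin a) (ZMod p)) ^ (n + 1)) := by
    intro j n
    induction n with
    | zero => simp
    | succ n ih =>
      rw [Function.iterate_succ_apply', ih, hsmul, hD]
      rw [Finset.sum_eq_single j]
      · rw [pderiv_pow, pderiv_X_self, mul_one]
        simp only [nsmul_eq_mul, Nat.add_sub_cancel, Nat.factorial_succ]
        push_cast
        ring
      · intro b _ hb
        rw [pderiv_pow, pderiv_X_of_ne hb.symm]
        ring
      · intro h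
        exact absurd (Finset.mem_univ j) h
  have hXp : ∀ j : Fin a, D^[p] (X j) = 0 := fun j => by
    rw [hXpow, hkill _ _ (Nat.dvd_factorial hp.pos le_rfl)]
  -- D^[p] on constants
  have hCp : ∀ c : ZMod p, D^[p] (C c : MvPolynomial (Fin a) (ZMod p)) = 0 := by
    intro c
    have h1 : D (C c : MvPolynomial (Fin a) (ZMod p)) = 0 := by simp [hD]
    have h2 : ∀ n, D^[n + 1] (C c : MvPolynomial (Fin a) (ZMod p)) = 0 := fun n => by
      rw [Function.iterate_succ_apply, h1, iter_zero D hsmul]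
    simpa only [Nat.sub_add_cancel hp.pos] using h2 (p - 1)
  -- main induction
  induction Q using MvPolynomial.induction_on with
  | C c => exact hCp c
  | add f g hf hg => rw [iter_add D hadd, hf, hg, add_zero]
  | mul_X f j hf =>
    rw [iter_leibniz D hadd hsmul hmul]
    refine Finset.sum_eq_zero fun k hk => ?_
    rw [Finset.mem_range] at hk
    rcases eq_or_ne k 0 with rfl | hk0
    · rw [tsub_zero, hf, zero_mul, smul_zero]
    rcases eq_or_ne k p with rfl | hkp
    · rw [hXp, mul_zero, smul_zero]
    · exact hkill _ _ (hp.dvd_choose_self hk0 (by omega))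
end

section
/- Let A = F_p[x_1,...,x_a] with derivation ∂_A = ∑_k x_k^2 ∂/∂x_k, let t ∈ A be homogeneous linear (a k-linear combination of the x_i), and define the twisted operator ∂_{A^t}(P) = ∂_A(P) + t·P. Then ∂_{A^t}^p = 0 as an operator on A. -/
open MvPolynomial Finset

section Aux

variable {p a : ℕ} [Fact p.Prime] (μ : Fin a → ZMod p)

noncomputable def myTk (k : Fin a) :
    Module.End (ZMod p) (MvPolynomial (Fin a) (ZMod p)) :=
  (LinearMap.mulLeft (ZMod p) (X k ^ 2)) ∘ₗ (pderiv k).toLinearMap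
    + μ k • LinearMap.mulLeft (ZMod p) (X k)

lemma myTk_apply (k : Fin a) (Q : MvPolynomial (Fin a) (ZMod p)) :
    myTk μ k Q = X k ^ 2 * pderiv k Q + μ k • (X k * Q) := by
  simp [myTk]

lemma myTk_monomial (k : Fin a) (n : Fin a →₀ ℕ) (c : ZMod p) :
    myTk μ k (monomial n c) =
      monomial (n + Finsupp.single k 1) (((n k : ZMod p) + μ k) * c) := by
  rw [myTk_apply, pderiv_monomial]
  have hX : X k * (monomial n c : MvPolynomial (Fin a) (ZMod p))
      = monomial (n + Finsupp.single k 1) c := by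
    rw [X, monomial_mul, one_mul, add_comm]
  rcases Nat.eq_zero_or_pos (n k) with h | h
  · rw [h, hX]
    simp [add_mul, smul_monomial, mul_comm]
  · have hsub : Finsupp.single k 2 + (n - Finsupp.single k 1) = n + Finsupp.single k 1 := by
      ext j
      rcases eq_or_ne j k with rfl | hj
      · simp only [Finsupp.add_apply, Finsupp.tsub_apply, Finsupp.single_eq_same]
        omega
      · simp [Finsupp.single_eq_of_ne' (Ne.symm hj)]
    have hX2 : (X k : MvPolynomial (Fin a) (ZMod p)) ^ 2 = monomial (Finsupp.single k 2) 1 := by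
      rw [X, monomial_pow, one_pow]; norm_num
    rw [hX2, monomial_mul, one_mul, hsub, hX, smul_monomial, ← map_add]
    congr 1
    rw [smul_eq_mul]
    ring

lemma myTk_pow_monomial (k : Fin a) (m : ℕ) (n : Fin a →₀ ℕ) (c : ZMod p) :
    (myTk μ k ^ m) (monomial n c) =
      monomial (n + Finsupp.single k m)
        ((∏ j ∈ range m, ((n k : ZMod p) + j + μ k)) * c) := by
  induction m with
  | zero => simp
  | succ m ih =>
    rw [pow_succ', Module.End.mul_apply, ih, myTk_monomial, prod_range_succ]
    have h1 : (n + Finsupp.single k m) k = n k + m := by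
      simp [Finsupp.add_apply]
    have h2 : n + Finsupp.single k m + Finsupp.single k 1 = n + Finsupp.single k (m + 1) := by
      ext j
      rcases eq_or_ne j k with rfl | hj
      · simp [Finsupp.add_apply, add_assoc]
      · simp [Finsupp.single_eq_of_ne' (Ne.symm hj)]
    rw [h1, h2]
    congr 1
    push_cast
    ring

lemma myTk_pow_p_monomial (k : Fin a) (n : Fin a →₀ ℕ) (c : ZMod p) :
    (myTk μ k ^ p) (monomial n c) = 0 := by
  rw [myTk_pow_monomial]
  have : (∏ j ∈ range p, ((n k : ZMod p) + j + μ k)) = 0 := by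
    apply Finset.prod_eq_zero (i := (-(↑(n k) + μ k) : ZMod p).val)
    · exact mem_range.2 ((-(↑(n k) + μ k) : ZMod p).val_lt)
    · rw [ZMod.natCast_val, ZMod.cast_id]; ring
  rw [this, zero_mul, map_zero]

lemma myTk_commute (j k : Fin a) : Commute (myTk μ j) (myTk μ k) := by
  rcases eq_or_ne j k with rfl | hjk
  · exact Commute.refl _
  · refine LinearMap.ext fun Q => ?_
    induction Q using MvPolynomial.induction_on' with
    | monomial n c =>
      simp only [Module.End.mul_apply, myTk_monomial]
      have hj : (n + Finsupp.single k 1 : Fin a →₀ ℕ) j = n j := by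
        simp [Finsupp.single_eq_of_ne' (Ne.symm hjk)]
      have hk : (n + Finsupp.single j 1 : Fin a →₀ ℕ) k = n k := by
        simp [Finsupp.single_eq_of_ne' hjk]
      rw [hj, hk]
      congr 1
      · rw [add_assoc, add_assoc, add_comm (Finsupp.single k 1)]
      · ring
    | add P R hP hR =>
      simp only [Module.End.mul_apply, map_add] at hP hR ⊢
      rw [hP, hR]

/-- Frobenius for a sum of pairwise commuting elements. -/
lemma sum_pow_char_of_commute {R : Type*} [Semiring R] [CharP R p]
    {ι : Type*} (s : Finset ι) (f : ι → R)
    (h : ∀ i ∈ s, ∀ j ∈ s, Commute (f i) (f j)) :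
    (∑ i ∈ s, f i) ^ p = ∑ i ∈ s, f i ^ p := by
  classical
  induction s using Finset.induction_on with
  | empty => simp [zero_pow (Fact.out (p := p.Prime)).ne_zero]
  | @insert i s hi ih =>
    rw [sum_insert hi, sum_insert hi,
      add_pow_char_of_commute p (Commute.sum_right _ _ _ fun j hj =>
        h i (mem_insert_self i s) j (mem_insert_of_mem hj)),
      ih fun x hx y hy => h x (mem_insert_of_mem hx) y (mem_insert_of_mem hy)]

end Aux

/-- Let A = 𝔽ₚ[x₁,…,xₐ] with derivation ∂_A = ∑ₖ xₖ² ∂/∂xₖ, and let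
t = ∑ᵢ μᵢ xᵢ be homogeneous linear. Then the twisted operator
∂_{Aᵗ}(P) = ∂_A(P) + t·P satisfies ∂_{Aᵗ}ᵖ = 0. -/
theorem stmt_13 (p : ℕ) [Fact p.Prime] (a : ℕ) (μ : Fin a → ZMod p)
    (D T : MvPolynomial (Fin a) (ZMod p) → MvPolynomial (Fin a) (ZMod p))
    (hD : ∀ Q : MvPolynomial (Fin a) (ZMod p), D Q = ∑ k : Fin a, X k ^ 2 * pderiv k Q)
    (hT : ∀ Q : MvPolynomial (Fin a) (ZMod p), T Q = D Q + (∑ i : Fin a, μ i • X i) * Q)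
    (Q : MvPolynomial (Fin a) (ZMod p)) :
    T^[p] Q = 0 := by
  have hchar : CharP (Module.End (ZMod p) (MvPolynomial (Fin a) (ZMod p))) p := by
    refine charP_of_injective_ringHom (f := algebraMap (ZMod p) _) ?_ p
    intro x y hxy
    have h1 : x • (1 : MvPolynomial (Fin a) (ZMod p)) = y • 1 := by
      have := congrArg (fun f => (f : Module.End (ZMod p) (MvPolynomial (Fin a) (ZMod p))) 1) hxy
      simpa [Algebra.algebraMap_eq_smul_one, smul_smul] using this
    exact smul_left_injective (ZMod p) one_ne_zero h1
  set E : Module.End (ZMod p) (MvPolynomial (Fin a) (ZMod p)) := ∑ k : Fin a, myTk μ k with hE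
  have hTE : T = ⇑E := by
    funext R
    rw [hT, hD]
    simp [hE, myTk_apply, Finset.sum_add_distrib, Finset.sum_mul, smul_mul_assoc]
  rw [hTE, ← Module.End.pow_apply]
  have hEp : E ^ p = 0 := by
    rw [hE, sum_pow_char_of_commute _ _ (fun i _ j _ => myTk_commute μ i j)]
    refine Finset.sum_eq_zero fun k _ => ?_
    refine LinearMap.ext fun R => ?_
    induction R using MvPolynomial.induction_on' with
    | monomial n c => simp [myTk_pow_p_monomial]
    | add P S hP hS => simp only [map_add, hP, hS, LinearMap.zero_apply, add_zero]
  rw [hEp]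
  rfl
end

section
/- Let A be a commutative algebra with derivation ∂, and for t ∈ A write ∂_t(P) = ∂(P) + tP. Then for all t_1, t_2 ∈ A and all k ≥ 0: ∂_{t_1+t_2}^k(1) = ∑_{j=0}^{k} C(k,j) ∂_{t_1}^j(1) · ∂_{t_2}^{k-j}(1). -/
/-- For a derivation ∂ on a commutative algebra A and t₁, t₂ ∈ A, writing
∂ₜ(P) = ∂(P) + tP, one has for all k:
∂_{t₁+t₂}ᵏ(1) = ∑_{j=0}^k C(k,j) ∂_{t₁}ʲ(1)·∂_{t₂}^{k-j}(1). -/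
theorem stmt_17 {R A : Type*} [CommRing R] [CommRing A] [Algebra R A]
    (D : Derivation R A A) (t₁ t₂ : A)
    (T₁ T₂ T₁₂ : A → A)
    (hT₁ : ∀ P : A, T₁ P = D P + t₁ * P)
    (hT₂ : ∀ P : A, T₂ P = D P + t₂ * P)
    (hT₁₂ : ∀ P : A, T₁₂ P = D P + (t₁ + t₂) * P)
    (k : ℕ) :
    T₁₂^[k] (1 : A) = ∑ j ∈ Finset.range (k + 1),
      (k.choose j) • (T₁^[j] (1 : A) * T₂^[k - j] (1 : A)) := by
  have key : ∀ x y : A, T₁₂ (x * y) = T₁ x * y + x * T₂ y := by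
    intro x y; rw [hT₁₂, hT₁, hT₂, D.leibniz]; simp only [smul_eq_mul]; ring
  have hsmul : ∀ (n : ℕ) (x : A), T₁₂ (n • x) = n • T₁₂ x := by
    intro n x
    rw [hT₁₂, hT₁₂, smul_add, map_nsmul, mul_smul_comm]
  have hsum : ∀ (s : Finset ℕ) (F : ℕ → A), T₁₂ (∑ j ∈ s, F j) = ∑ j ∈ s, T₁₂ (F j) := by
    intro s F
    rw [hT₁₂, map_sum, Finset.mul_sum, ← Finset.sum_add_distrib]
    exact Finset.sum_congr rfl fun j _ => (hT₁₂ (F j)).symm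
  induction k with
  | zero => simp
  | succ n ih =>
    rw [Function.iterate_succ_apply', ih, hsum]
    have step : ∀ j ∈ Finset.range (n + 1),
        T₁₂ (n.choose j • (T₁^[j] (1:A) * T₂^[n-j] 1))
          = n.choose j • (T₁^[j+1] (1:A) * T₂^[n-j] 1)
            + n.choose j • (T₁^[j] (1:A) * T₂^[n+1-j] 1) := by
      intro j hj
      rw [Finset.mem_range] at hj
      have hle : j ≤ n := Nat.lt_succ_iff.mp hj
      have h1 : n + 1 - j = (n - j) + 1 := by omega
      rw [hsmul, key, smul_add, Function.iterate_succ_apply', h1,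
        Function.iterate_succ_apply']
    rw [Finset.sum_congr rfl step, Finset.sum_add_distrib]
    -- RHS manipulation
    rw [Finset.sum_range_succ' (fun j => (n+1).choose j • (T₁^[j] (1:A) * T₂^[n+1-j] 1))]
    simp only [Nat.choose_zero_right, Nat.sub_zero, Function.iterate_zero, id_eq, one_mul,
      one_smul, Nat.choose_succ_succ, add_smul]
    rw [Finset.sum_add_distrib]
    -- first LHS sum matches ∑ choose n i • f(i+1) g(n-i)
    have e1 : ∑ i ∈ Finset.range (n+1), n.choose i • (T₁^[i+1] (1:A) * T₂^[n+1-(i+1)] 1)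
        = ∑ i ∈ Finset.range (n+1), n.choose i • (T₁^[i+1] (1:A) * T₂^[n-i] 1) := by
      refine Finset.sum_congr rfl fun i hi => ?_
      have : n + 1 - (i + 1) = n - i := by omega
      rw [this]
    have e2 : ∑ i ∈ Finset.range (n+1), n.choose (i+1) • (T₁^[i+1] (1:A) * T₂^[n+1-(i+1)] 1)
        = ∑ i ∈ Finset.range n, n.choose (i+1) • (T₁^[i+1] (1:A) * T₂^[n-i] 1) := by
      rw [Finset.sum_range_succ, Nat.choose_succ_self, zero_smul, add_zero]
      refine Finset.sum_congr rfl fun i hi => ?_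
      rw [Finset.mem_range] at hi
      have : n + 1 - (i + 1) = n - i := by omega
      rw [this]
    have e3 : ∑ j ∈ Finset.range (n+1), n.choose j • (T₁^[j] (1:A) * T₂^[n+1-j] 1)
        = (T₂^[n+1] (1:A))
          + ∑ i ∈ Finset.range n, n.choose (i+1) • (T₁^[i+1] (1:A) * T₂^[n-i] 1) := by
      rw [Finset.sum_range_succ' (fun j => n.choose j • (T₁^[j] (1:A) * T₂^[n+1-j] 1))]
      simp only [Nat.choose_zero_right, Nat.sub_zero, Function.iterate_zero, id_eq, one_mul,
        one_smul]
      rw [add_comm]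
      congr 1
      refine Finset.sum_congr rfl fun i hi => ?_
      have : n + 1 - (i + 1) = n - i := by omega
      rw [this]
    rw [e1, e2, e3]
    ring
end
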